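/- Let X be a gts and αX a topological compactification of X_top with topology τ_{αX}. Define Op^S_{αX} = {V ∈ τ_{αX} : α⁻¹(V) ∈ Op_X} and Cov^S_{αX} = {V ⊆ Op^S_{αX} : α⁻¹(V) ∈ Cov_X}. If X is open in αX, then the remainder Y = αX ∖ X, as a subspace of the gts (αX, Op^S_{αX}, Cov^S_{αX}), is a topological gts, i.e., Cov_Y = P(Op_Y). -/
import Mathlib


open Set TopologicalSpace Topology

universe u

/-- A generalized topology in the sense of Delfs–Knebusch (axioms following
Piękosz, Definition 2.2.1): `Cov` is the collection of admissible open families,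
and the open sets are the members of `⋃₀ Cov`. -/
structure GenTop (X : Type u) : Type u where
  Cov : Set (Set (Set X))
  univ_open : Set.univ ∈ ⋃₀ Cov
  finite_admissible : ∀ 𝒰 : Set (Set X), 𝒰.Finite → 𝒰 ⊆ ⋃₀ Cov → 𝒰 ∈ Cov
  union_open : ∀ 𝒰 ∈ Cov, ⋃₀ 𝒰 ∈ ⋃₀ Cov
  restrict : ∀ 𝒰 ∈ Cov, ∀ V ∈ ⋃₀ Cov, (fun U => V ∩ U) '' 𝒰 ∈ Cov
  transitive : ∀ 𝒰 ∈ Cov, ∀ f : Set X → Set (Set X),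
    (∀ U ∈ 𝒰, f U ∈ Cov ∧ ⋃₀ f U = U) → {V : Set X | ∃ U ∈ 𝒰, V ∈ f U} ∈ Cov
  coarsen : ∀ 𝒰 ∈ Cov, ∀ 𝒱 ⊆ ⋃₀ Cov, (∀ U ∈ 𝒰, ∃ V ∈ 𝒱, U ⊆ V) →
    ⋃₀ 𝒱 = ⋃₀ 𝒰 → 𝒱 ∈ Cov
  regular : ∀ 𝒰 ∈ Cov, ∀ W ⊆ ⋃₀ 𝒰, (∀ U ∈ 𝒰, W ∩ U ∈ ⋃₀ Cov) → W ∈ ⋃₀ Cov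

namespace GenTop

variable {X : Type u} (G : GenTop X)

/-- The open sets of a gts. -/
def Opens : Set (Set X) := ⋃₀ G.Cov

/-- The closed sets of a gts. -/
def Closeds : Set (Set X) := {A : Set X | Aᶜ ∈ G.Opens}

/-- The topologization of a gts: the topology generated by the open sets. -/
def topol : TopologicalSpace X := TopologicalSpace.generateFrom G.Opens

/-- A gts is weakly normal if disjoint sets, each a singleton or closed,
can be separated by disjoint open sets. -/
def WeaklyNormal : Prop :=
  ∀ A₁ A₂ : Set X, ((∃ x, A₁ = {x}) ∨ A₁ ∈ G.Closeds) →
    ((∃ x, A₂ = {x}) ∨ A₂ ∈ G.Closeds) → Disjoint A₁ A₂ →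
    ∃ W₁ ∈ G.Opens, ∃ W₂ ∈ G.Opens, Disjoint W₁ W₂ ∧ A₁ ⊆ W₁ ∧ A₂ ⊆ W₂

end GenTop

variable {X K : Type u}

/-- The opens of the strongest generalized topology in a compactification `K`
associated with the gts `X`: opens of `K` whose trace on `X` is open. -/
def OpS (G : GenTop X) [TopologicalSpace K] (α : X → K) : Set (Set K) :=
  {V : Set K | IsOpen V ∧ α ⁻¹' V ∈ G.Opens}

/-- The strongest generalized topology in a compactification `K` associated
with the generalized topology of `X`. -/
def CovS (G : GenTop X) [TopologicalSpace K] (α : X → K) : Set (Set (Set K)) :=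
  {𝒱 : Set (Set K) | 𝒱 ⊆ OpS G α ∧ (fun V => α ⁻¹' V) '' 𝒱 ∈ G.Cov}


lemma sUnion_powerset_eq {β : Type u} (s : Set β) : ⋃₀ (𝒫 s) = s := by
  apply subset_antisymm
  · rintro x ⟨t, ht, hx⟩
    exact ht hx
  · intro x hx
    exact ⟨s, Set.Subset.rfl, hx⟩

/-- If `X` is open in a topological compactification `αX` of `X_top`, then the
remainder, as a subspace of the gts `(αX, Op^S, Cov^S)`, is a topological gts. -/
theorem stmt_11 {X K : Type u} (G : GenTop X) [TopologicalSpace K] [CompactSpace K]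
    (α : X → K) (hinj : Function.Injective α)
    (hind : @Topology.IsInducing X K G.topol _ α) (hdense : DenseRange α)
    (hopen : IsOpen (Set.range α))
    (H : GenTop ↥((Set.range α)ᶜ))
    (hHge : {𝒲 : Set (Set ↥((Set.range α)ᶜ)) | ∃ 𝒱 ∈ CovS G α,
        𝒲 = (fun V => (Subtype.val ⁻¹' V : Set ↥((Set.range α)ᶜ))) '' 𝒱} ⊆ H.Cov)
    (hHmin : ∀ Q : GenTop ↥((Set.range α)ᶜ),
      {𝒲 : Set (Set ↥((Set.range α)ᶜ)) | ∃ 𝒱 ∈ CovS G α,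
        𝒲 = (fun V => (Subtype.val ⁻¹' V : Set ↥((Set.range α)ᶜ))) '' 𝒱} ⊆ Q.Cov →
      H.Cov ⊆ Q.Cov) :
    H.Cov = Set.powerset H.Opens := by
  classical
  -- Traces of opens of `K` that contain `range α`.
  set T : Set (Set ↥((Set.range α)ᶜ)) :=
    {W | ∃ V : Set K, IsOpen V ∧ Set.range α ⊆ V ∧ W = Subtype.val ⁻¹' V} with hTdef
  -- the trace of `range α` on the remainder is empty
  have htr : (Subtype.val ⁻¹' Set.range α : Set ↥((Set.range α)ᶜ)) = ∅ := by
    ext y; simpa using y.2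
  have hTuniv : Set.univ ∈ T := ⟨Set.univ, isOpen_univ, Set.subset_univ _, by simp⟩
  have hTunion : ∀ 𝒰 ⊆ T, ⋃₀ 𝒰 ∈ T := by
    intro 𝒰 h𝒰
    refine ⟨(⋃₀ {V : Set K | IsOpen V ∧ Set.range α ⊆ V ∧ Subtype.val ⁻¹' V ∈ 𝒰}) ∪
      Set.range α, ?_, ?_, ?_⟩
    · exact (isOpen_sUnion fun V hV => hV.1).union hopen
    · exact Set.subset_union_right
    · ext y
      simp only [Set.mem_sUnion, Set.mem_preimage, Set.mem_union]
      constructor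
      · rintro ⟨U, hU, hy⟩
        obtain ⟨V, hVo, hVr, rfl⟩ := h𝒰 hU
        exact Or.inl ⟨V, ⟨hVo, hVr, hU⟩, hy⟩
      · rintro (⟨V, ⟨hVo, hVr, hVU⟩, hy⟩ | hy)
        · exact ⟨Subtype.val ⁻¹' V, hVU, hy⟩
        · exact absurd hy y.2
  have hTinter : ∀ W₁ ∈ T, ∀ W₂ ∈ T, W₁ ∩ W₂ ∈ T := by
    rintro W₁ ⟨V₁, hV₁o, hV₁r, rfl⟩ W₂ ⟨V₂, hV₂o, hV₂r, rfl⟩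
    exact ⟨V₁ ∩ V₂, hV₁o.inter hV₂o, Set.subset_inter hV₁r hV₂r, by
      simp [Set.preimage_inter]⟩
  -- The candidate minimal gts with `Cov = 𝒫 T`.
  let Q : GenTop ↥((Set.range α)ᶜ) :=
    { Cov := Set.powerset T
      univ_open := by rw [sUnion_powerset_eq _]; exact hTuniv
      finite_admissible := by
        intro 𝒰 _ h; rwa [sUnion_powerset_eq _] at h
      union_open := by
        intro 𝒰 h; rw [sUnion_powerset_eq _] at *; exact hTunion 𝒰 h
      restrict := by
        intro 𝒰 h𝒰 V hV
        rw [sUnion_powerset_eq _] at hV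
        rintro W ⟨U, hU, rfl⟩
        exact hTinter V hV U (h𝒰 hU)
      transitive := by
        intro 𝒰 h𝒰 f hf W hW
        obtain ⟨U, hU, hWU⟩ := hW
        exact (hf U hU).1 hWU
      coarsen := by
        intro 𝒰 _ 𝒱 h𝒱 _ _; rwa [sUnion_powerset_eq _] at h𝒱
      regular := by
        intro 𝒰 h𝒰 W hW hWU
        rw [sUnion_powerset_eq _]
        have : W = ⋃₀ ((fun U => W ∩ U) '' 𝒰) := by
          ext x
          simp only [Set.mem_sUnion, Set.mem_image]
          constructor
          · intro hx
            obtain ⟨U, hU, hxU⟩ := hW hx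
            exact ⟨W ∩ U, ⟨U, hU, rfl⟩, hx, hxU⟩
          · rintro ⟨_, ⟨U, hU, rfl⟩, hx, _⟩; exact hx
        rw [this]
        refine hTunion _ ?_
        rintro _ ⟨U, hU, rfl⟩
        have := hWU U hU
        rwa [sUnion_powerset_eq _] at this }
  -- Every trace of a `CovS`-family lands in `𝒫 T`.
  have hS_Q : {𝒲 : Set (Set ↥((Set.range α)ᶜ)) | ∃ 𝒱 ∈ CovS G α,
      𝒲 = (fun V => (Subtype.val ⁻¹' V : Set ↥((Set.range α)ᶜ))) '' 𝒱} ⊆ Q.Cov := by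
    rintro 𝒲 ⟨𝒱, h𝒱, rfl⟩
    rintro W ⟨V, hV, rfl⟩
    refine ⟨V ∪ Set.range α, (h𝒱.1 hV).1.union hopen, Set.subset_union_right, ?_⟩
    rw [Set.preimage_union, htr, Set.union_empty]
  have h1 : H.Cov ⊆ Set.powerset T := hHmin Q hS_Q
  -- Every subset of `T` is a trace of a `CovS`-family.
  have h2 : Set.powerset T ⊆ H.Cov := by
    intro 𝒲 h𝒲
    apply hHge
    refine ⟨{V : Set K | IsOpen V ∧ Set.range α ⊆ V ∧ Subtype.val ⁻¹' V ∈ 𝒲}, ⟨?_, ?_⟩, ?_⟩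
    · rintro V ⟨hVo, hVr, -⟩
      refine ⟨hVo, ?_⟩
      have : α ⁻¹' V = Set.univ := by
        ext x; simp [hVr (Set.mem_range_self x)]
      rw [this]
      exact G.univ_open
    · apply G.finite_admissible
      · apply Set.Finite.subset (Set.finite_singleton Set.univ)
        rintro _ ⟨V, ⟨hVo, hVr, -⟩, rfl⟩
        simp only [Set.mem_singleton_iff]
        ext x; simp [hVr (Set.mem_range_self x)]
      · rintro _ ⟨V, ⟨hVo, hVr, -⟩, rfl⟩
        have h : α ⁻¹' V = Set.univ := by
          ext x; simp [hVr (Set.mem_range_self x)]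
        show α ⁻¹' V ∈ ⋃₀ G.Cov
        rw [h]
        exact G.univ_open
    · ext W
      constructor
      · intro hW
        obtain ⟨V, hVo, hVr, rfl⟩ := h𝒲 hW
        exact ⟨V, ⟨hVo, hVr, hW⟩, rfl⟩
      · rintro ⟨V, ⟨hVo, hVr, hVW⟩, rfl⟩
        exact hVW
  -- Conclude.
  ext 𝒰
  constructor
  · intro h𝒰 U hU
    exact ⟨𝒰, h𝒰, hU⟩
  · intro h𝒰
    apply h2
    intro U hU
    have : U ∈ H.Opens := h𝒰 hU
    obtain ⟨𝒰', h𝒰', hU'⟩ := this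
    exact h1 h𝒰' hU'
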